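/- Let Γ be a finite simple graph, 𝒢 a saturated set of proper special subgroups, A_Δ ∈ 𝒢, and v ∈ Δ. Let A^Δ_{≥v} be generated by the vertices w of Δ with v ≤_Δ w (domination computed inside Δ). Then A^Δ_{≥v} is upwards closed under ≤_𝒢 and is not 𝒢-star-separated by any outside vertex; hence A^Δ_{≥v} ∈ 𝒢. -/

import Mathlib

/-! Basic definitions: right-angled Artin groups, special subgroups,
relative automorphism notions, and graph-theoretic notions from
Day–Wade, "Relative automorphism groups of right-angled Artin groups". -/

namespace RAAGPaper

open scoped commutatorElement

variable {V : Type}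

/-- The commutator relations defining the RAAG on a simple graph. -/
def raagRels (G : SimpleGraph V) : Set (FreeGroup V) :=
  {r | ∃ v w : V, G.Adj v w ∧ r = ⁅FreeGroup.of v, FreeGroup.of w⁆}

/-- The right-angled Artin group on the graph `G`. -/
abbrev RAAG (G : SimpleGraph V) : Type := PresentedGroup (raagRels G)

/-- The generator of `RAAG G` corresponding to a vertex. -/
def gen (G : SimpleGraph V) (v : V) : RAAG G := PresentedGroup.of v

/-- The special subgroup `A_Δ` generated by the vertices of a (full) subgraph `Δ`. -/
def sp (G : SimpleGraph V) (Δ : Set V) : Subgroup (RAAG G) :=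
  Subgroup.closure (gen G '' Δ)

/-- The link of a vertex. -/
def lk (G : SimpleGraph V) (v : V) : Set V := {w | G.Adj v w}

/-- The star of a vertex. -/
def st (G : SimpleGraph V) (v : V) : Set V := insert v (lk G v)

/-- The standard (domination) order: `u ≤ v` iff `lk(u) ⊆ st(v)`. -/
def stdLE (G : SimpleGraph V) (u v : V) : Prop := lk G u ⊆ st G v

/-- An automorphism acts trivially on a subgroup if it agrees with an inner
automorphism on that subgroup. -/
def ActsTrivially {A : Type*} [Group A] (φ : MulAut A) (H : Subgroup A) : Prop :=
  ∃ g : A, ∀ h ∈ H, φ h = g * h * g⁻¹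

/-- An automorphism preserves a subgroup if it sends it to a conjugate of itself. -/
def Preserves {A : Type*} [Group A] (φ : MulAut A) (H : Subgroup A) : Prop :=
  ∃ g : A, Subgroup.map φ.toMonoidHom H = Subgroup.map (MulAut.conj g).toMonoidHom H

/-- `𝒢`-adjacency: adjacent in `G` or contained in a common member of `𝒢`. -/
def gAdj (G : SimpleGraph V) (calG : Set (Set V)) (u w : V) : Prop :=
  G.Adj u w ∨ ∃ Δ ∈ calG, u ∈ Δ ∧ w ∈ Δ

/-- `𝒢`-reachability within a set `S` of vertices. -/
def gReach (G : SimpleGraph V) (calG : Set (Set V)) (S : Set V) : V → V → Prop :=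
  Relation.ReflTransGen (fun a b => a ∈ S ∧ b ∈ S ∧ gAdj G calG a b)

/-- `K` is a union of `𝒢`-components of (the full subgraph on) `S`.
With `calG = ∅` this says `K` is a union of connected components of `S`. -/
def UnionOfComps (G : SimpleGraph V) (calG : Set (Set V)) (S K : Set V) : Prop :=
  K ⊆ S ∧ ∀ u ∈ K, ∀ w, gReach G calG S u w → w ∈ K

/-- The members of `𝒢` not containing the vertex `x`. -/
def calGx (calG : Set (Set V)) (x : V) : Set (Set V) := {Δ ∈ calG | x ∉ Δ}

/-- The `𝒢`-order: `u ≤_𝒢 v` iff `u ≤ v` in the standard order and every member of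
`𝒢` containing `u` also contains `v`. -/
def gLE (G : SimpleGraph V) (calG : Set (Set V)) (u v : V) : Prop :=
  stdLE G u v ∧ ∀ Δ ∈ calG, u ∈ Δ → v ∈ Δ

/-- `Δ` meets at most one `𝒢^x`-component of `Γ - st(x)`. -/
def MeetsAtMostOne (G : SimpleGraph V) (calG : Set (Set V)) (x : V) (Δ : Set V) : Prop :=
  ∀ u w, u ∈ Δ → w ∈ Δ → u ∈ (st G x)ᶜ → w ∈ (st G x)ᶜ →
    gReach G (calGx calG x) ((st G x)ᶜ) u w

/-- `Δ` is upwards closed under the `𝒢`-order. -/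
def UpClosed (G : SimpleGraph V) (calG : Set (Set V)) (Δ : Set V) : Prop :=
  ∀ v ∈ Δ, ∀ w, gLE G calG v w → w ∈ Δ

/-- `Δ` is not `𝒢`-star-separated by any outside vertex. -/
def NotStarSep (G : SimpleGraph V) (calG : Set (Set V)) (Δ : Set V) : Prop :=
  ∀ x, x ∉ Δ → MeetsAtMostOne G calG x Δ

/-- All members of `calG` are proper (special) subgroups. -/
def Proper (calG : Set (Set V)) : Prop := ∀ Δ ∈ calG, Δ ≠ Set.univ

/-- Word length of an element of the RAAG with respect to the standard generators. -/
noncomputable def wordLength (G : SimpleGraph V) (g : RAAG G) : ℕ :=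
  sInf {n | ∃ l : List (V × Bool), PresentedGroup.mk (raagRels G) (FreeGroup.mk l) = g ∧
    l.length = n}

/-- An element is cyclically reduced if it has minimal word length in its
conjugacy class. -/
noncomputable def CycRed (G : SimpleGraph V) (g : RAAG G) : Prop :=
  ∀ h : RAAG G, wordLength G g ≤ wordLength G (h * g * h⁻¹)

/-- The link of `v` computed inside the full subgraph `Δ`. -/
def lkIn (G : SimpleGraph V) (Δ : Set V) (v : V) : Set V := {w ∈ Δ | G.Adj v w}

/-- The star of `v` computed inside the full subgraph `Δ`. -/
def stIn (G : SimpleGraph V) (Δ : Set V) (v : V) : Set V := insert v (lkIn G Δ v)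

/-- Domination computed inside the full subgraph `Δ`. -/
def leIn (G : SimpleGraph V) (Δ : Set V) (u v : V) : Prop :=
  lkIn G Δ u ⊆ stIn G Δ v

/-- The induced peripheral structure `𝒢_Δ`: proper intersections of members of `𝒢`
with `Δ`. -/
def inducedG (calG : Set (Set V)) (Δ : Set V) : Set (Set V) :=
  {Θ | ∃ Λ ∈ calG, Θ = Δ ∩ Λ ∧ Δ ∩ Λ ≠ Δ}

/-- `𝒢` is saturated: it contains every proper special subgroup invariant under
`Out⁰(A_Γ; 𝒢)`, where invariance is characterized by being upwards closed under
`≤_𝒢` and not `𝒢`-star-separated by an outside vertex. -/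
def Saturated (G : SimpleGraph V) (calG : Set (Set V)) : Prop :=
  ∀ Δ : Set V, Δ ≠ Set.univ → UpClosed G calG Δ → NotStarSep G calG Δ → Δ ∈ calG

/-- `φ` is an inversion automorphism. -/
def IsInversion (G : SimpleGraph V) (φ : MulAut (RAAG G)) : Prop :=
  ∃ v, φ (gen G v) = (gen G v)⁻¹ ∧ ∀ w, w ≠ v → φ (gen G w) = gen G w

/-- `φ` is a transvection. -/
def IsTransvection (G : SimpleGraph V) (φ : MulAut (RAAG G)) : Prop :=
  ∃ v w, v ≠ w ∧ stdLE G v w ∧ φ (gen G v) = gen G v * gen G w ∧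
    ∀ u, u ≠ v → φ (gen G u) = gen G u

/-- `φ` is an extended partial conjugation. -/
def IsEPC (G : SimpleGraph V) (φ : MulAut (RAAG G)) : Prop :=
  ∃ x K, UnionOfComps G ∅ ((st G x)ᶜ) K ∧
    (∀ w ∈ K, φ (gen G w) = gen G x * gen G w * (gen G x)⁻¹) ∧
    ∀ w ∉ K, φ (gen G w) = gen G w

/-- The subgroup `Aut⁰(A_Γ)` generated by inversions, transvections and extended
partial conjugations. -/
def Aut0 (G : SimpleGraph V) : Subgroup (MulAut (RAAG G)) :=
  Subgroup.closure {φ | IsInversion G φ ∨ IsTransvection G φ ∨ IsEPC G φ}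


/-- For saturated `𝒢`, `A_Δ ∈ 𝒢`, and `v ∈ Δ`, the subgraph of
vertices of `Δ` dominating `v` inside `Δ` is upwards closed under `≤_𝒢`, not
`𝒢`-star-separated by any outside vertex, and hence lies in `𝒢`. -/
theorem anchored_invariance [Fintype V] (G : SimpleGraph V) (calG : Set (Set V))
    (hprop : Proper calG) (hsat : Saturated G calG)
    (Δ : Set V) (hΔ : Δ ∈ calG) (v : V) (hv : v ∈ Δ)
    (S : Set V) (hS : S = {w ∈ Δ | leIn G Δ v w}) :
    UpClosed G calG S ∧ NotStarSep G calG S ∧ S ∈ calG := by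
  subst hS
  -- `S ⊆ Δ` and mem characterization
  have hmem : ∀ w, w ∈ {w ∈ Δ | leIn G Δ v w} ↔ w ∈ Δ ∧ leIn G Δ v w := fun w => Iff.rfl
  -- Upwards closed
  have hup : UpClosed G calG {w ∈ Δ | leIn G Δ v w} := by
    intro w hw w' hle
    obtain ⟨hwΔ, hwle⟩ := hw
    obtain ⟨hst, hG⟩ := hle
    have hw'Δ : w' ∈ Δ := hG Δ hΔ hwΔ
    refine ⟨hw'Δ, ?_⟩
    intro u hu
    obtain ⟨huΔ, hvu⟩ := hu
    have hu' : u ∈ stIn G Δ w := hwle ⟨huΔ, hvu⟩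
    rcases hu' with h | ⟨_, hwu⟩
    · -- u = w
      subst h
      have hv' : v ∈ st G w' := hst (show G.Adj u v from hvu.symm)
      rcases hv' with h' | hadj
      · -- v = w'
        exact Or.inr ⟨huΔ, h' ▸ hvu⟩
      · -- G.Adj w' v
        have hw'S : w' ∈ stIn G Δ u := hwle ⟨hw'Δ, hadj.symm⟩
        rcases hw'S with h'' | ⟨_, huw'⟩
        · exact Or.inl h''.symm
        · exact Or.inr ⟨huΔ, huw'.symm⟩
    · -- G.Adj w u
      have : u ∈ st G w' := hst hwu
      rcases this with h | h
      · exact Or.inl h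
      · exact Or.inr ⟨huΔ, h⟩
  refine ⟨hup, ?_⟩
  have hns : NotStarSep G calG {w ∈ Δ | leIn G Δ v w} := by
    intro x hx u w hu hw hust hwst
    have hsym : Symmetric (fun a b => a ∈ (st G x)ᶜ ∧ b ∈ (st G x)ᶜ ∧
        gAdj G (calGx calG x) a b) := by
      rintro a b ⟨ha, hb, hab⟩
      refine ⟨hb, ha, ?_⟩
      rcases hab with h | ⟨Θ, hΘ, haΘ, hbΘ⟩
      · exact Or.inl h.symm
      · exact Or.inr ⟨Θ, hΘ, hbΘ, haΘ⟩
    by_cases hxΔ : x ∈ Δ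
    · -- x ∈ Δ but x ∉ S: some u0 ∈ lkIn Δ v with u0 ∉ stIn Δ x
      have hnle : ¬ leIn G Δ v x := fun h => hx ⟨hxΔ, h⟩
      rw [leIn, Set.not_subset] at hnle
      obtain ⟨u0, hu0l, hu0n⟩ := hnle
      obtain ⟨hu0Δ, hvu0⟩ := hu0l
      have hu0x : u0 ∈ (st G x)ᶜ := by
        intro hc
        rcases hc with h | h
        · exact hu0n (Or.inl h)
        · exact hu0n (Or.inr ⟨hu0Δ, h⟩)
      -- every element of S \ st x reaches u0
      have key : ∀ y, y ∈ {w ∈ Δ | leIn G Δ v w} → y ∈ (st G x)ᶜ →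
          gReach G (calGx calG x) ((st G x)ᶜ) y u0 := by
        intro y hy hyx
        have : u0 ∈ stIn G Δ y := hy.2 ⟨hu0Δ, hvu0⟩
        rcases this with h | ⟨_, hyu0⟩
        · exact h ▸ Relation.ReflTransGen.refl
        · exact Relation.ReflTransGen.single ⟨hyx, hu0x, Or.inl hyu0⟩
      exact (key u hu hust).trans
        ((letI : Std.Symm (fun a b => a ∈ (st G x)ᶜ ∧ b ∈ (st G x)ᶜ ∧
          gAdj G (calGx calG x) a b) := ⟨fun a b h => hsym h⟩
        Std.Symm.symm (self := Relation.ReflTransGen.stdSymm (r := fun a b => a ∈ (st G x)ᶜ ∧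
          b ∈ (st G x)ᶜ ∧ gAdj G (calGx calG x) a b)) _ _ (key w hw hwst)))
    · -- x ∉ Δ: u, w ∈ Δ ∈ 𝒢^x, one step
      exact Relation.ReflTransGen.single
        ⟨hust, hwst, Or.inr ⟨Δ, ⟨hΔ, hxΔ⟩, hu.1, hw.1⟩⟩
  refine ⟨hns, ?_⟩
  apply hsat _ ?_ hup hns
  intro h
  have hΔne := hprop Δ hΔ
  apply hΔne
  ext y
  simp only [Set.mem_univ, iff_true]
  have : y ∈ {w ∈ Δ | leIn G Δ v w} := h ▸ Set.mem_univ y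
  exact this.1

end RAAGPaper
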